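/- Let n ∈ ℕ and let R, A, B : ℝ → Matrix (Fin n) (Fin n) ℝ be differentiable with R(t) orthogonal (R(t)·R(t)ᵀ = 1) for all t. Define a(t) := R(t)·A(t)·R(t)ᵀ, b(t) := R(t)·B(t)·R(t)ᵀ, and the polar spin ω(t) := R'(t)·R(t)ᵀ. Then for every t: trace(A(t)ᵀ·B'(t)) = trace(a(t)ᵀ·(b'(t) + b(t)·ω(t) − ω(t)·b(t))), i.e., the double contraction of A with the material rate of B equals the double contraction of a with the Green–Naghdi corotational rate of b. -/

import Mathlib

open Matrix

/-- Entrywise derivative of a matrix-valued function of a real variable. -/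
noncomputable def matDeriv {n : ℕ} (A : ℝ → Matrix (Fin n) (Fin n) ℝ) (t : ℝ) :
    Matrix (Fin n) (Fin n) ℝ :=
  Matrix.of fun i j => deriv (fun s => A s i j) t

lemma matDeriv_mul_aux {n : ℕ} (M N : ℝ → Matrix (Fin n) (Fin n) ℝ) (t : ℝ)
    (hM : ∀ i j, DifferentiableAt ℝ (fun s => M s i j) t)
    (hN : ∀ i j, DifferentiableAt ℝ (fun s => N s i j) t) :
    matDeriv (fun s => M s * N s) t = matDeriv M t * N t + M t * matDeriv N t := by
  ext i j
  simp only [matDeriv, Matrix.of_apply, Matrix.add_apply, Matrix.mul_apply]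
  rw [deriv_fun_sum (fun k _ => (hM i k).fun_mul (hN k j))]
  rw [← Finset.sum_add_distrib]
  exact Finset.sum_congr rfl fun k _ => deriv_fun_mul (hM i k) (hN k j)

lemma matDeriv_entries_mul {n : ℕ} (M N : ℝ → Matrix (Fin n) (Fin n) ℝ) (t : ℝ)
    (hM : ∀ i j, DifferentiableAt ℝ (fun s => M s i j) t)
    (hN : ∀ i j, DifferentiableAt ℝ (fun s => N s i j) t) :
    ∀ i j, DifferentiableAt ℝ (fun s => (M s * N s) i j) t := by
  intro i j
  have h : (fun s => (M s * N s) i j) = fun s => ∑ k, M s i k * N s k j := by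
    funext s; simp [Matrix.mul_apply]
  rw [h]
  exact DifferentiableAt.fun_sum fun k _ => (hM i k).mul (hN k j)

lemma matDeriv_transpose {n : ℕ} (M : ℝ → Matrix (Fin n) (Fin n) ℝ) (t : ℝ) :
    matDeriv (fun s => (M s)ᵀ) t = (matDeriv M t)ᵀ := rfl

lemma matDeriv_const_one {n : ℕ} {M : ℝ → Matrix (Fin n) (Fin n) ℝ} (t : ℝ)
    (h : ∀ s, M s = 1) : matDeriv M t = 0 := by
  ext i j
  simp only [matDeriv, Matrix.of_apply]
  have : (fun s => M s i j) = fun _ => (1 : Matrix (Fin n) (Fin n) ℝ) i j := by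
    funext s; rw [h s]
  rw [this, deriv_const]
  simp [Matrix.zero_apply]

/-- Proposition 2.2a: `A : Ḃ = a : b^GN`, i.e. the double contraction of the
Lagrangian pair equals that of the Eulerian counterpart pair with the
Green–Naghdi corotational rate. -/
theorem trace_material_rate_eq_trace_green_naghdi {n : ℕ}
    (R A B : ℝ → Matrix (Fin n) (Fin n) ℝ)
    (hR : ∀ t, ∀ i j, DifferentiableAt ℝ (fun s => R s i j) t)
    (hA : ∀ t, ∀ i j, DifferentiableAt ℝ (fun s => A s i j) t)
    (hB : ∀ t, ∀ i j, DifferentiableAt ℝ (fun s => B s i j) t)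
    (horth : ∀ t, R t * (R t)ᵀ = 1) :
    ∀ t : ℝ,
      let a : ℝ → Matrix (Fin n) (Fin n) ℝ := fun s => R s * A s * (R s)ᵀ
      let b : ℝ → Matrix (Fin n) (Fin n) ℝ := fun s => R s * B s * (R s)ᵀ
      let ω : Matrix (Fin n) (Fin n) ℝ := matDeriv R t * (R t)ᵀ
      ((A t)ᵀ * matDeriv B t).trace =
        ((a t)ᵀ * (matDeriv b t + b t * ω - ω * b t)).trace := by
  intro t a b ω
  have hRT : ∀ i j, DifferentiableAt ℝ (fun s => (R s)ᵀ i j) t := fun i j => hR t j i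
  have horth' : ∀ s, (R s)ᵀ * R s = 1 := fun s => mul_eq_one_comm.mp (horth s)
  -- derivative of R Rᵀ = 1 is zero
  have hzero : matDeriv R t * (R t)ᵀ + R t * (matDeriv R t)ᵀ = 0 := by
    have h1 : matDeriv (fun s => R s * (R s)ᵀ) t
        = matDeriv R t * (R t)ᵀ + R t * (matDeriv R t)ᵀ := by
      rw [show (fun s => R s * (R s)ᵀ) = fun s => R s * (fun u => (R u)ᵀ) s from rfl,
        matDeriv_mul_aux R (fun u => (R u)ᵀ) t (hR t) hRT, matDeriv_transpose]
    rw [← h1, matDeriv_const_one t horth]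
  -- derivative of Rᵀ R = 1 is zero
  have hzero2 : (matDeriv R t)ᵀ * R t + (R t)ᵀ * matDeriv R t = 0 := by
    have h1 : matDeriv (fun s => (R s)ᵀ * R s) t
        = (matDeriv R t)ᵀ * R t + (R t)ᵀ * matDeriv R t := by
      rw [show (fun s => (R s)ᵀ * R s) = fun s => (fun u => (R u)ᵀ) s * R s from rfl,
        matDeriv_mul_aux (fun u => (R u)ᵀ) R t hRT (hR t), matDeriv_transpose]
    rw [← h1, matDeriv_const_one t horth']
  -- derivative of b
  have hRB : ∀ i j, DifferentiableAt ℝ (fun s => (R s * B s) i j) t :=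
    matDeriv_entries_mul R B t (hR t) (hB t)
  have hb : matDeriv b t = matDeriv R t * B t * (R t)ᵀ + R t * matDeriv B t * (R t)ᵀ
      + R t * B t * (matDeriv R t)ᵀ := by
    show matDeriv (fun s => (fun u => R u * B u) s * (fun u => (R u)ᵀ) s) t = _
    rw [matDeriv_mul_aux _ _ t hRB hRT, matDeriv_transpose,
      matDeriv_mul_aux R B t (hR t) (hB t)]
    noncomm_ring
  -- key simplification: b' + bω - ωb = R B' Rᵀ
  have key : matDeriv b t + b t * ω - ω * b t = R t * matDeriv B t * (R t)ᵀ := by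
    have hωR : ω * (R t * B t * (R t)ᵀ) = matDeriv R t * B t * (R t)ᵀ := by
      show matDeriv R t * (R t)ᵀ * (R t * B t * (R t)ᵀ) = _
      rw [show matDeriv R t * (R t)ᵀ * (R t * B t * (R t)ᵀ)
          = matDeriv R t * ((R t)ᵀ * R t) * B t * (R t)ᵀ by noncomm_ring,
        horth' t, mul_one]
    have hbω : R t * B t * (R t)ᵀ * ω = -(R t * B t * (matDeriv R t)ᵀ) := by
      have h2 : (R t)ᵀ * matDeriv R t = -((matDeriv R t)ᵀ * R t) :=
        eq_neg_of_add_eq_zero_right hzero2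
      show R t * B t * (R t)ᵀ * (matDeriv R t * (R t)ᵀ) = _
      have hT : (R t)ᵀ * (matDeriv R t * (R t)ᵀ) = -((matDeriv R t)ᵀ) := by
        calc (R t)ᵀ * (matDeriv R t * (R t)ᵀ) = ((R t)ᵀ * matDeriv R t) * (R t)ᵀ := by
              noncomm_ring
          _ = -((matDeriv R t)ᵀ * R t) * (R t)ᵀ := by rw [h2]
          _ = -((matDeriv R t)ᵀ * (R t * (R t)ᵀ)) := by noncomm_ring
          _ = -((matDeriv R t)ᵀ) := by rw [horth t, mul_one]
      calc R t * B t * (R t)ᵀ * (matDeriv R t * (R t)ᵀ)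
          = R t * B t * ((R t)ᵀ * (matDeriv R t * (R t)ᵀ)) := by noncomm_ring
        _ = R t * B t * (-((matDeriv R t)ᵀ)) := by rw [hT]
        _ = -(R t * B t * (matDeriv R t)ᵀ) := by noncomm_ring
    show matDeriv b t + (R t * B t * (R t)ᵀ) * ω - ω * (R t * B t * (R t)ᵀ) = _
    rw [hb, hbω, hωR]
    noncomm_ring
  show ((A t)ᵀ * matDeriv B t).trace
      = ((R t * A t * (R t)ᵀ)ᵀ * (matDeriv b t + b t * ω - ω * b t)).trace
  rw [key]
  simp only [Matrix.transpose_mul, Matrix.transpose_transpose]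
  rw [show R t * ((A t)ᵀ * (R t)ᵀ) * (R t * matDeriv B t * (R t)ᵀ)
      = R t * ((A t)ᵀ * ((R t)ᵀ * R t) * matDeriv B t) * (R t)ᵀ by noncomm_ring,
    horth' t, mul_one, Matrix.trace_mul_cycle, ← Matrix.mul_assoc, horth' t, one_mul]
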